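/- Let K ≥ 3 and let Φ_K : (ℂ^3)^K → ℂ^4 be the map sending (G_1,…,G_K) to the last row of the product M_1(G_1)⋯M_K(G_K), where for odd k, M_k(x,y,z) is the 4×4 lower elementary symplectic matrix ((1,0,0,0),(0,1,0,0),(x,y,1,0),(y,z,0,1)), and for even k, M_k(x,y,z) = ((1,0,x,y),(0,1,y,z),(0,0,1,0),(0,0,0,1)). Then the image of Φ_K contains ℂ^4 ∖ {0}; in fact every nonzero vector (a_1,a_2,a_3,a_4) ∈ ℂ^4 is the last row of such a product. -/

import Mathlib

open Matrix

lemma one_fin_four' : (1 : Matrix (Fin 4) (Fin 4) ℂ) = !![1,0,0,0;0,1,0,0;0,0,1,0;0,0,0,1] := by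
  ext i j; fin_cases i <;> fin_cases j <;> rfl

lemma prod3_row (x y z x' y' z' x'' y'' z'' : ℂ) :
    (!![1,0,0,0;0,1,0,0;(x:ℂ),y,1,0;y,z,0,1] *
     (!![1,0,x',y';0,1,y',z';0,0,1,0;0,0,0,1] *
      !![1,0,0,0;0,1,0,0;x'',y'',1,0;y'',z'',0,1])) 3
    = ![y + (y*x'+z*y')*x'' + (y*y'+z*z'+1)*y'',
       z + (y*x'+z*y')*y'' + (y*y'+z*z'+1)*z'',
       y*x'+z*y',
       y*y'+z*z'+1] := by
  funext j; fin_cases j <;> simp [Matrix.mul_apply, Fin.sum_univ_four] <;> ring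

lemma reduce (n : ℕ) (G : Fin (3 + n) → ℂ × ℂ × ℂ) (hG : ∀ i : Fin (3 + n), 3 ≤ i.val → G i = 0) :
    (List.ofFn (fun i : Fin (3 + n) =>
      if i.val % 2 = 0 then
        (!![1, 0, 0, 0;
            0, 1, 0, 0;
            (G i).1, (G i).2.1, 1, 0;
            (G i).2.1, (G i).2.2, 0, 1] : Matrix (Fin 4) (Fin 4) ℂ)
      else
        !![1, 0, (G i).1, (G i).2.1;
           0, 1, (G i).2.1, (G i).2.2;
           0, 0, 1, 0;
           0, 0, 0, 1])).prod =
    !![1,0,0,0;0,1,0,0;(G ⟨0, by omega⟩).1,(G ⟨0, by omega⟩).2.1,1,0;(G ⟨0, by omega⟩).2.1,(G ⟨0, by omega⟩).2.2,0,1] *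
     (!![1,0,(G ⟨1, by omega⟩).1,(G ⟨1, by omega⟩).2.1;0,1,(G ⟨1, by omega⟩).2.1,(G ⟨1, by omega⟩).2.2;0,0,1,0;0,0,0,1] *
      !![1,0,0,0;0,1,0,0;(G ⟨2, by omega⟩).1,(G ⟨2, by omega⟩).2.1,1,0;(G ⟨2, by omega⟩).2.1,(G ⟨2, by omega⟩).2.2,0,1]) := by
  rw [List.ofFn_add, List.prod_append]
  have h1 : (List.ofFn fun j : Fin n =>
      (fun i : Fin (3 + n) =>
        if i.val % 2 = 0 then
          (!![1, 0, 0, 0; 0, 1, 0, 0;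
              (G i).1, (G i).2.1, 1, 0;
              (G i).2.1, (G i).2.2, 0, 1] : Matrix (Fin 4) (Fin 4) ℂ)
        else
          !![1, 0, (G i).1, (G i).2.1;
             0, 1, (G i).2.1, (G i).2.2;
             0, 0, 1, 0; 0, 0, 0, 1]) (Fin.natAdd 3 j)).prod = 1 := by
    apply List.prod_eq_one
    intro M hM
    simp only [List.mem_ofFn, Set.mem_range] at hM
    obtain ⟨j, rfl⟩ := hM
    have hj : G (Fin.natAdd 3 j) = 0 := hG _ (by simp [Fin.natAdd])
    simp only [hj]
    rw [one_fin_four']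
    split <;> norm_num
  rw [h1, mul_one]
  simp [List.ofFn_succ, Fin.castAdd, Fin.castLE]

lemma solve (a : Fin 4 → ℂ) (ha : a ≠ 0) :
    ∃ y z x' y' z' x'' y'' z'' : ℂ,
      y + (y*x'+z*y')*x'' + (y*y'+z*z'+1)*y'' = a 0 ∧
      z + (y*x'+z*y')*y'' + (y*y'+z*z'+1)*z'' = a 1 ∧
      y*x'+z*y' = a 2 ∧ y*y'+z*z'+1 = a 3 := by
  by_cases h2 : a 2 ≠ 0
  · refine ⟨1, 0, a 2, a 3 - 1, 0,
      (a 0 - 1 - a 3 * (a 1 / a 2)) / a 2, a 1 / a 2, 0, ?_, ?_, ?_, ?_⟩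
    · field_simp; ring
    · field_simp; ring
    · ring
    · ring
  · push_neg at h2
    by_cases h3 : a 3 ≠ 0
    · refine ⟨0, 1, 0, 0, a 3 - 1, 0, a 0 / a 3, (a 1 - 1) / a 3, ?_, ?_, ?_, ?_⟩
      · field_simp; ring
      · field_simp; ring
      · simp [h2]
      · ring
    · push_neg at h3
      by_cases h0 : a 0 ≠ 0
      · refine ⟨a 0, a 1, a 1 / (a 0 * a 0), -1 / a 0, 0, 0, 0, 0, ?_, ?_, ?_, ?_⟩
        · field_simp; ring
        · field_simp; ring
        · rw [h2]; field_simp; ring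
        · rw [h3]; field_simp; ring
      · push_neg at h0
        by_cases h1 : a 1 ≠ 0
        · refine ⟨0, a 1, 0, 0, -1 / a 1, 0, 0, 0, ?_, ?_, ?_, ?_⟩
          · simp [h0]
          · field_simp; ring
          · simp [h2]
          · rw [h3]; field_simp; ring
        · push_neg at h1
          exfalso
          apply ha
          funext j
          fin_cases j <;> assumption

/-- Surjectivity of the last-row map for products of K ≥ 3 elementary symplectic 4×4 matrices:
every nonzero vector of ℂ⁴ is the last row of such a product, alternating lower and upper
elementary symplectic matrices (starting with a lower one). -/
theorem lastRow_surjective (K : ℕ) (hK : 3 ≤ K) (a : Fin 4 → ℂ) (ha : a ≠ 0) :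
    ∃ G : Fin K → ℂ × ℂ × ℂ,
      (List.ofFn (fun i : Fin K =>
        if i.val % 2 = 0 then
          (!![1, 0, 0, 0;
              0, 1, 0, 0;
              (G i).1, (G i).2.1, 1, 0;
              (G i).2.1, (G i).2.2, 0, 1] : Matrix (Fin 4) (Fin 4) ℂ)
        else
          !![1, 0, (G i).1, (G i).2.1;
             0, 1, (G i).2.1, (G i).2.2;
             0, 0, 1, 0;
             0, 0, 0, 1])).prod 3 = a := by
  obtain ⟨n, rfl⟩ : ∃ n, K = 3 + n := ⟨K - 3, by omega⟩
  obtain ⟨y, z, x', y', z', x'', y'', z'', e0, e1, e2, e3⟩ := solve a ha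
  refine ⟨fun i => if i.val = 0 then (0, y, z) else if i.val = 1 then (x', y', z')
    else if i.val = 2 then (x'', y'', z'') else 0, ?_⟩
  rw [reduce n _ (fun i hi => by
    have h0 : i.val ≠ 0 := by omega
    have h1 : i.val ≠ 1 := by omega
    have h2 : i.val ≠ 2 := by omega
    simp [h0, h1, h2])]
  show (!![1,0,0,0;0,1,0,0;(0:ℂ),y,1,0;y,z,0,1] *
     (!![1,0,x',y';0,1,y',z';0,0,1,0;0,0,0,1] *
      !![1,0,0,0;0,1,0,0;x'',y'',1,0;y'',z'',0,1])) 3 = a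
  rw [prod3_row 0 y z x' y' z' x'' y'' z'']
  funext j
  fin_cases j <;> simpa using by assumption
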